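/- Let X be a Banach space, and let g be a continuous, weak*-lower semicontinuous, positively quadratic homogeneous, coercive convex function on X* that is Gâteaux differentiable everywhere. Then the function f on X with Fenchel conjugate F(f) = g (f continuous, positively quadratic homogeneous, coercive, convex) is strictly convex. -/

import Mathlib

open Set Filter Metric Topology

/-- Gâteaux differentiability of a real-valued function at a point. -/
def GateauxDifferentiableAt {E : Type*} [NormedAddCommGroup E] [NormedSpace ℝ E]
    (f : E → ℝ) (x : E) : Prop :=
  ∃ φ : E →L[ℝ] ℝ, ∀ y : E,
    Tendsto (fun t : ℝ => (f (x + t • y) - f x) / t) (𝓝[≠] (0 : ℝ)) (𝓝 (φ y))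

/-- Existence of a subgradient of a continuous convex function, via Hahn–Banach
separation of the open strict epigraph from a boundary point. -/
lemma exists_subgradient_aux {X : Type*} [NormedAddCommGroup X] [NormedSpace ℝ X]
    (f : X → ℝ) (hfcont : Continuous f) (hfconv : ConvexOn ℝ univ f) (m : X) :
    ∃ φ : X →L[ℝ] ℝ, ∀ z, φ z - f z ≤ φ m - f m := by
  set s : Set (X × ℝ) := {p | f p.1 < p.2} with hs
  have hs_conv : Convex ℝ s := by
    have h := hfconv.convex_strict_epigraph
    have : {p : X × ℝ | p.1 ∈ univ ∧ f p.1 < p.2} = s := by ext p; simp [hs]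
    rwa [this] at h
  have hs_open : IsOpen s := isOpen_lt (hfcont.comp continuous_fst) continuous_snd
  have hm : ((m, f m) : X × ℝ) ∉ s := by simp [hs]
  obtain ⟨Φ, hΦ⟩ := geometric_hahn_banach_open_point hs_conv hs_open hm
  set c : ℝ := Φ (0, 1) with hc_def
  set L : X →L[ℝ] ℝ := Φ.comp (ContinuousLinearMap.inl ℝ X ℝ) with hL_def
  have hdecomp : ∀ (z : X) (r : ℝ), Φ (z, r) = L z + r * c := by
    intro z r
    have h1 : ((z, r) : X × ℝ) = (z, 0) + r • ((0 : X), (1 : ℝ)) := by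
      simp [Prod.ext_iff]
    rw [h1, map_add, map_smul]
    simp [hL_def, hc_def, smul_eq_mul]
  have key : ∀ z r, f z < r → L z + r * c < L m + f m * c := by
    intro z r h
    have h2 := hΦ (z, r) h
    rwa [hdecomp, hdecomp] at h2
  have hc : c < 0 := by
    have h2 := key m (f m + 1) (by linarith)
    nlinarith
  have hle : ∀ z, L z + f z * c ≤ L m + f m * c := by
    intro z
    by_contra hcon
    push_neg at hcon
    set gap : ℝ := L z + f z * c - (L m + f m * c) with hgap_def
    have hgap : 0 < gap := by simp [hgap_def]; linarith
    have hε : 0 < gap / (-2 * c) := div_pos hgap (by linarith)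
    have h1 := key z (f z + gap / (-2 * c)) (by linarith)
    have h2 : (-2 * c) * (gap / (-2 * c)) = gap :=
      mul_div_cancel₀ _ (by linarith)
    nlinarith
  have hc' : 0 < -c := neg_pos.2 hc
  refine ⟨(-c)⁻¹ • L, fun z => ?_⟩
  have h := hle z
  have key2 : L z - L m ≤ (f z - f m) * (-c) := by nlinarith
  have h3 : (-c)⁻¹ * (L z - L m) ≤ f z - f m := by
    rw [inv_mul_le_iff₀ hc']
    nlinarith
  simp only [ContinuousLinearMap.smul_apply, smul_eq_mul]
  nlinarith [h3]

/-- Let `g` be a continuous, weak*-lower semicontinuous, positively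
quadratic homogeneous, coercive convex function on `X*` that is Gâteaux differentiable
everywhere, and let `f` be the continuous positively quadratic homogeneous coercive
convex function on `X` with Fenchel conjugate `g`. Then `f` is strictly convex. -/
theorem strictly_convex_of_dual_gateaux_differentiable
    {X : Type*} [NormedAddCommGroup X] [NormedSpace ℝ X] [CompleteSpace X]
    (g : (X →L[ℝ] ℝ) → ℝ) (f : X → ℝ)
    (hgcont : Continuous g)
    (hgcoer : Tendsto g (Bornology.cobounded (X →L[ℝ] ℝ)) atTop)
    (hghom : ∀ k : ℝ, 0 ≤ k → ∀ φ, g (k • φ) = k ^ 2 * g φ)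
    (hgconv : ConvexOn ℝ univ g)
    (hglsc : LowerSemicontinuous
      (fun ψ : WeakDual ℝ X => g (StrongDual.toWeakDual.symm ψ)))
    (hgdiff : ∀ φ : X →L[ℝ] ℝ, GateauxDifferentiableAt g φ)
    (hfcont : Continuous f)
    (hfcoer : Tendsto f (Bornology.cobounded X) atTop)
    (hfhom : ∀ k : ℝ, 0 ≤ k → ∀ x, f (k • x) = k ^ 2 * f x)
    (hfconv : ConvexOn ℝ univ f)
    (hconj : ∀ φ : X →L[ℝ] ℝ, (⨆ x : X, (φ x - f x)) = g φ) :
    StrictConvexOn ℝ univ f := by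
  -- basic facts about f
  have f0 : f 0 = 0 := by
    have h := hfhom 0 le_rfl 0
    simpa using h
  have fnonneg : ∀ z, 0 ≤ f z := by
    intro z
    have h2 := hfconv.2 (mem_univ (0 : X)) (mem_univ z)
      (by norm_num : (0:ℝ) ≤ 1/2) (by norm_num : (0:ℝ) ≤ 1/2) (by norm_num)
    have h3 := hfhom (1/2) (by norm_num) z
    rw [smul_zero, zero_add] at h2
    rw [h3, f0] at h2
    norm_num at h2
    linarith
  -- coercivity: a quadratic lower bound outside a ball
  have hev : ∀ᶠ z in Bornology.cobounded X, 1 ≤ f z := hfcoer.eventually_ge_atTop 1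
  have hbdd : Bornology.IsBounded {z : X | 1 ≤ f z}ᶜ := by
    rw [Bornology.isBounded_def, compl_compl]
    exact hev
  obtain ⟨R0, hR0⟩ := hbdd.subset_closedBall 0
  set R : ℝ := max R0 0 + 1 with hR_def
  have hRpos : 0 < R := by rw [hR_def]; positivity
  have hRR0 : R0 < R := by rw [hR_def]; have := le_max_left R0 (0:ℝ); linarith
  clear_value R
  have hcoR : ∀ w : X, R ≤ ‖w‖ → 1 ≤ f w := by
    intro w hw
    by_contra hcon
    push_neg at hcon
    have : w ∈ closedBall (0 : X) R0 := hR0 (by simp; linarith)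
    rw [mem_closedBall, dist_zero_right] at this
    linarith [hw, ‹‖w‖ ≤ R0›]
  have hquad : ∀ z : X, R ≤ ‖z‖ → ‖z‖ ^ 2 ≤ R ^ 2 * f z := by
    intro z hz
    have hnz : 0 < ‖z‖ := lt_of_lt_of_le hRpos hz
    set w : X := (R / ‖z‖) • z with hw_def
    have hw : ‖w‖ = R := by
      rw [hw_def, norm_smul, Real.norm_eq_abs, abs_of_pos (div_pos hRpos hnz)]
      field_simp
    have h1 : 1 ≤ f w := hcoR w hw.ge
    have h2 : z = (‖z‖ / R) • w := by
      rw [hw_def, smul_smul]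
      rw [div_mul_div_comm, mul_comm]
      rw [div_self (by positivity), one_smul]
    have h3 : f z = (‖z‖ / R) ^ 2 * f w := by
      conv_lhs => rw [h2]
      exact hfhom _ (by positivity) w
    have ht : ‖z‖ / R * R = ‖z‖ := div_mul_cancel₀ _ hRpos.ne'
    calc ‖z‖ ^ 2 = (‖z‖ / R * R) ^ 2 := by rw [ht]
      _ = (‖z‖ / R) ^ 2 * R ^ 2 := by ring
      _ ≤ (‖z‖ / R) ^ 2 * R ^ 2 * f w := le_mul_of_one_le_right (by positivity) h1
      _ = R ^ 2 * f z := by rw [h3]; ring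
  -- the defining suprema are bounded above
  have bdd : ∀ ψ : X →L[ℝ] ℝ, BddAbove (range fun z : X => ψ z - f z) := by
    intro ψ
    refine ⟨‖ψ‖ * R + ‖ψ‖ ^ 2 * R ^ 2 / 4, ?_⟩
    rintro v ⟨z, rfl⟩
    show ψ z - f z ≤ ‖ψ‖ * R + ‖ψ‖ ^ 2 * R ^ 2 / 4
    have hψz : ψ z ≤ ‖ψ‖ * ‖z‖ :=
      le_trans (le_abs_self _) (ψ.le_opNorm z)
    rcases le_or_gt ‖z‖ R with h | h
    · have h5 := fnonneg z
      have h6 : ‖ψ‖ * ‖z‖ ≤ ‖ψ‖ * R := mul_le_mul_of_nonneg_left h (norm_nonneg ψ)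
      have hQ : 0 ≤ ‖ψ‖ ^ 2 * R ^ 2 / 4 := by positivity
      linarith
    · have hq := hquad z h.le
      nlinarith [mul_le_mul_of_nonneg_left hψz (sq_nonneg R), hq,
        sq_nonneg (‖z‖ - ‖ψ‖ * R ^ 2 / 2),
        mul_nonneg (norm_nonneg ψ) (pow_pos hRpos 3).le, pow_pos hRpos 2]
  have gle : ∀ (ψ : X →L[ℝ] ℝ) (z : X), ψ z - f z ≤ g ψ := by
    intro ψ z
    rw [← hconj ψ]
    exact le_ciSup (bdd ψ) z
  -- now the main argument
  refine ⟨convex_univ, fun x _ y _ hxy a b ha hb hab => ?_⟩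
  have hle := hfconv.2 (mem_univ x) (mem_univ y) ha.le hb.le hab
  simp only [smul_eq_mul] at hle
  rcases lt_or_eq_of_le hle with hlt | heq
  · exact hlt
  -- equality case: derive a contradiction
  exfalso
  set m : X := a • x + b • y with hm_def
  obtain ⟨φ, hφ⟩ := exists_subgradient_aux f hfcont hfconv m
  have gφ : g φ = φ m - f m := by
    rw [← hconj φ]
    exact le_antisymm (ciSup_le fun z => hφ z) (le_ciSup (bdd φ) m)
  have hφm : φ m = a * φ x + b * φ y := by
    rw [hm_def, map_add, map_smul, map_smul]; simp
  have hsum : a * (φ x - f x) + b * (φ y - f y) = g φ := by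
    rw [gφ, hφm, hm_def, heq]; ring
  have h1 : φ x - f x ≤ g φ := by rw [gφ]; exact hφ x
  have h2 : φ y - f y ≤ g φ := by rw [gφ]; exact hφ y
  have hx' : φ x - f x = g φ := by
    by_contra hne
    have hlt1 : φ x - f x < g φ := lt_of_le_of_ne h1 hne
    have hm1 := mul_lt_mul_of_pos_left hlt1 ha
    have h2' := mul_le_mul_of_nonneg_left h2 hb.le
    have h3 : a * g φ + b * g φ = g φ := by rw [← add_mul, hab, one_mul]
    linarith
  have hy' : φ y - f y = g φ := by
    by_contra hne
    have hlt1 : φ y - f y < g φ := lt_of_le_of_ne h2 hne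
    have hm1 := mul_lt_mul_of_pos_left hlt1 hb
    have h1' := mul_le_mul_of_nonneg_left h1 ha.le
    have h3 : a * g φ + b * g φ = g φ := by rw [← add_mul, hab, one_mul]
    linarith
  -- x and y are both subgradients of g at φ
  have hsub : ∀ (w : X), φ w - f w = g φ →
      ∀ (ψ : X →L[ℝ] ℝ) (t : ℝ), g φ + t * ψ w ≤ g (φ + t • ψ) := by
    intro w hw ψ t
    have h := gle (φ + t • ψ) w
    have happ : (φ + t • ψ) w = φ w + t * ψ w := by simp
    rw [happ] at h
    linarith
  obtain ⟨Φ, hΦ⟩ := hgdiff φ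
  have hval : ∀ (w : X), φ w - f w = g φ → ∀ ψ : X →L[ℝ] ℝ, Φ ψ = ψ w := by
    intro w hw ψ
    have htend := hΦ ψ
    have hmono1 : (𝓝[>] (0:ℝ)) ≤ 𝓝[≠] (0:ℝ) :=
      nhdsWithin_mono 0 (fun t ht => ne_of_gt ht)
    have hmono2 : (𝓝[<] (0:ℝ)) ≤ 𝓝[≠] (0:ℝ) :=
      nhdsWithin_mono 0 (fun t ht => ne_of_lt ht)
    have hge : ψ w ≤ Φ ψ := by
      refine ge_of_tendsto (htend.mono_left hmono1) ?_
      filter_upwards [self_mem_nhdsWithin] with t ht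
      rw [mem_Ioi] at ht
      rw [le_div_iff₀ ht]
      have := hsub w hw ψ t
      linarith
    have hle2 : Φ ψ ≤ ψ w := by
      refine le_of_tendsto (htend.mono_left hmono2) ?_
      filter_upwards [self_mem_nhdsWithin] with t ht
      rw [mem_Iio] at ht
      rw [div_le_iff_of_neg ht]
      have := hsub w hw ψ t
      linarith
    linarith
  obtain ⟨ψ₀, _, hψv⟩ := exists_dual_vector ℝ (x - y) (norm_ne_zero_iff.2 (sub_ne_zero.2 hxy))
  have e1 : Φ ψ₀ = ψ₀ x := hval x hx' ψ₀
  have e2 : Φ ψ₀ = ψ₀ y := hval y hy' ψ₀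
  have hxy' : ψ₀ x - ψ₀ y = ‖x - y‖ := by
    rw [← map_sub]; exact_mod_cast hψv
  have : (0:ℝ) < ‖x - y‖ := norm_pos_iff.2 (sub_ne_zero.2 hxy)
  rw [← hxy'] at this
  rw [← e1, ← e2] at this
  simp at this
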